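/- arXiv:2002.08798 — 4 statements merged into one kernel-verified Lean document; each statement's English description precedes it below -/
import Mathlib

section
/- The pmf P_Δ(x) = λμ((1−λ)^{x−1} − (1−μ)^{x−1})/(μ−λ) on {1,2,...} (λ ≠ μ in (0,1)) has second moment ∑_{x≥1} x²·P_Δ(x) = (λ²(2−μ) + λμ(2−μ) + 2μ²)/(λ²μ²). -/
lemma hasSum_sq_mul_geometric (r : ℝ) (h : ‖r‖ < 1) :
    HasSum (fun n : ℕ ↦ ((n : ℝ) + 1) ^ 2 * r ^ n) ((1 + r) / (1 - r) ^ 3) := by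
  have h1 : HasSum (fun n : ℕ ↦ ((n + 2).choose 2 : ℝ) * r ^ n) (1 / (1 - r) ^ 3) :=
    hasSum_choose_mul_geometric_of_norm_lt_one 2 h
  have h2 : HasSum (fun n : ℕ ↦ ((n + 1 + 1).choose 2 : ℝ) * r ^ (n + 1))
      (r * (1 / (1 - r) ^ 3)) := by
    have := h1.mul_left r
    convert this using 2 with n
    case e'_3 => rfl
    ring
  have h3 : HasSum (fun n : ℕ ↦ ((n + 1).choose 2 : ℝ) * r ^ n)
      (r * (1 / (1 - r) ^ 3)) := by
    have := (hasSum_nat_add_iff (f := fun n : ℕ ↦ ((n + 1).choose 2 : ℝ) * r ^ n) 1).mp h2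
    simpa using this
  have h4 := h1.add h3
  have heq : ∀ n : ℕ, ((n + 2).choose 2 : ℝ) * r ^ n + ((n + 1).choose 2 : ℝ) * r ^ n
      = ((n : ℝ) + 1) ^ 2 * r ^ n := by
    intro n
    have : ((n + 2).choose 2 : ℝ) + ((n + 1).choose 2 : ℝ) = ((n : ℝ) + 1) ^ 2 := by
      rw [Nat.cast_choose_two, Nat.cast_choose_two]
      push_cast; ring
    rw [← add_mul, this]
  have h5 : HasSum (fun n : ℕ ↦ ((n : ℝ) + 1) ^ 2 * r ^ n)
      (1 / (1 - r) ^ 3 + r * (1 / (1 - r) ^ 3)) := by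
    convert h4 using 1
    ext n; exact (heq n).symm
  convert h5 using 1
  have hr : (1 - r) ≠ 0 := by
    intro hc
    rw [show r = 1 by linarith [sub_eq_zero.mp hc]] at h
    simp at h
  field_simp

/-- The pmf `P_Δ(x) = λμ((1−λ)^{x−1} − (1−μ)^{x−1})/(μ−λ)` on `{1,2,...}` has second moment
`(λ²(2−μ) + λμ(2−μ) + 2μ²)/(λ²μ²)`. -/
theorem lcfs_aoi_second_moment (l m : ℝ) (hl0 : 0 < l) (hl1 : l < 1) (hm0 : 0 < m)
    (hm1 : m < 1) (hne : l ≠ m) :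
    (∑' x : ℕ, (x : ℝ) ^ 2 * (if x = 0 then (0 : ℝ)
      else l * m * ((1 - l) ^ (x - 1) - (1 - m) ^ (x - 1)) / (m - l))) =
    (l ^ 2 * (2 - m) + l * m * (2 - m) + 2 * m ^ 2) / (l ^ 2 * m ^ 2) := by
  set f : ℕ → ℝ := fun x ↦ (x : ℝ) ^ 2 * (if x = 0 then (0 : ℝ)
      else l * m * ((1 - l) ^ (x - 1) - (1 - m) ^ (x - 1)) / (m - l)) with hf
  have hml : m - l ≠ 0 := sub_ne_zero.mpr (Ne.symm hne)
  have hrl : ‖(1 - l)‖ < 1 := by rw [Real.norm_eq_abs, abs_lt]; constructor <;> linarith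
  have hrm : ‖(1 - m)‖ < 1 := by rw [Real.norm_eq_abs, abs_lt]; constructor <;> linarith
  have hA := (hasSum_sq_mul_geometric (1 - l) hrl).mul_left (l * m / (m - l))
  have hB := (hasSum_sq_mul_geometric (1 - m) hrm).mul_left (l * m / (m - l))
  have hS : HasSum (fun n : ℕ ↦ f (n + 1))
      (l * m / (m - l) * ((1 + (1 - l)) / (1 - (1 - l)) ^ 3)
        - l * m / (m - l) * ((1 + (1 - m)) / (1 - (1 - m)) ^ 3)) := by
    convert hA.sub hB using 2 with n
    case e'_3 => rfl
    simp only [hf, Nat.add_sub_cancel]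
    have : (n + 1 : ℕ) ≠ 0 := Nat.succ_ne_zero n
    rw [if_neg this]
    push_cast
    ring
  have hF : HasSum f (l * m / (m - l) * ((1 + (1 - l)) / (1 - (1 - l)) ^ 3)
        - l * m / (m - l) * ((1 + (1 - m)) / (1 - (1 - m)) ^ 3)) := by
    have := (hasSum_nat_add_iff (f := f) 1).mp hS
    simpa [hf] using this
  rw [hF.tsum_eq]
  have hl : l ≠ 0 := ne_of_gt hl0
  have hm : m ≠ 0 := ne_of_gt hm0
  have e1 : (1 : ℝ) - (1 - l) = l := by ring
  have e2 : (1 : ℝ) - (1 - m) = m := by ring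
  rw [e1, e2]
  field_simp
  ring
end

section
/- For 0 < λ < μ < 1 and ρ = (1−μ)/(1−λ), the sum ∑_{x=1}^∞ x · [ ((μ−λ)/(1−μ))·ρ^{x−1} + λμ(1−x)(1−μ)^{x−2} + λμ(1−λ)^{x−1}/(μ−λ) + (λ² − λμ(μ+1) + μ²)(1−μ)^{x−2}/(λ−μ) ] equals 1/λ + (1−λ)/(μ−λ) − λ/μ² + λ/μ. -/
open Function

lemma hasSum_add_one_mul_geometric {q : ℝ} (hq : |q| < 1) :
    HasSum (fun n : ℕ => ((n : ℝ) + 1) * q ^ n) (1 / (1 - q) ^ 2) := by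
  have h := hasSum_choose_mul_geometric_of_norm_lt_one (𝕜 := ℝ) 1 (by rwa [Real.norm_eq_abs])
  convert h using 2 with n
  rfl
  simp [Nat.choose_one_right]

lemma hasSum_add_one_mul_add_two_mul_geometric {q : ℝ} (hq : |q| < 1) :
    HasSum (fun n : ℕ => ((n : ℝ) + 1) * ((n : ℝ) + 2) * q ^ n) (2 / (1 - q) ^ 3) := by
  have h := (hasSum_choose_mul_geometric_of_norm_lt_one (𝕜 := ℝ) 2 (by rwa [Real.norm_eq_abs])).mul_left 2
  have hc : ∀ n : ℕ, ((n + 2).choose 2 : ℝ) = ((n : ℝ) + 1) * ((n : ℝ) + 2) / 2 := by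
    intro n
    rw [Nat.cast_choose_two]
    push_cast
    ring
  convert h using 1
  · rfl
  · funext n
    rw [hc n]
    ring
  · rw [show (2:ℕ) + 1 = 3 from rfl]
    ring

/-- For `0 < λ < μ < 1` and `ρ = (1−μ)/(1−λ)`, the mean of the stationary AoI pmf of the
FCFS Geo/Geo/1 queue equals `1/λ + (1−λ)/(μ−λ) − λ/μ² + λ/μ`. -/
theorem fcfs_aoi_mean (l m : ℝ) (hl0 : 0 < l) (hlm : l < m) (hm1 : m < 1)
    (r : ℝ) (hr : r = (1 - m) / (1 - l)) :
    (∑' x : ℕ, (if x = 0 then (0 : ℝ) else (x : ℝ) *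
      ((m - l) / (1 - m) * r ^ ((x : ℤ) - 1)
        + l * m * (1 - (x : ℝ)) * (1 - m) ^ ((x : ℤ) - 2)
        + l * m * (1 - l) ^ ((x : ℤ) - 1) / (m - l)
        + (l ^ 2 - l * m * (m + 1) + m ^ 2) * (1 - m) ^ ((x : ℤ) - 2) / (l - m))))
    = 1 / l + (1 - l) / (m - l) - l / m ^ 2 + l / m := by
  have hm0 : 0 < m := lt_trans hl0 hlm
  have hml : 0 < m - l := by linarith
  have h1m : 0 < 1 - m := by linarith
  have h1l : 0 < 1 - l := by linarith
  have hr0 : 0 < r := by rw [hr]; positivity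
  have hr1 : r < 1 := by
    rw [hr, div_lt_one h1l]; linarith
  have hml' : m - l ≠ 0 := ne_of_gt hml
  have h1m' : (1:ℝ) - m ≠ 0 := ne_of_gt h1m
  have h1l' : (1:ℝ) - l ≠ 0 := ne_of_gt h1l
  have hm' : m ≠ 0 := ne_of_gt hm0
  have hl' : l ≠ 0 := ne_of_gt hl0
  set A : ℝ := (m - l) / (1 - m) with hA
  set C : ℝ := l * m / (m - l) with hC
  set B : ℝ := l * m / (1 - m) with hB
  set K : ℝ := l ^ 2 - l * m * (m + 1) + m ^ 2 with hK
  set D : ℝ := K / ((l - m) * (1 - m)) with hD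
  set E : ℝ := 2 * B + D with hE
  set F : ℝ := -B with hF
  set f : ℕ → ℝ := fun x => (if x = 0 then (0 : ℝ) else (x : ℝ) *
      ((m - l) / (1 - m) * r ^ ((x : ℤ) - 1)
        + l * m * (1 - (x : ℝ)) * (1 - m) ^ ((x : ℤ) - 2)
        + l * m * (1 - l) ^ ((x : ℤ) - 1) / (m - l)
        + (l ^ 2 - l * m * (m + 1) + m ^ 2) * (1 - m) ^ ((x : ℤ) - 2) / (l - m))) with hf
  -- the shifted summand
  have key : ∀ n : ℕ, f (n + 1) =
      A * (((n : ℝ) + 1) * r ^ n) + C * (((n : ℝ) + 1) * (1 - l) ^ n)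
      + E * (((n : ℝ) + 1) * (1 - m) ^ n)
      + F * (((n : ℝ) + 1) * ((n : ℝ) + 2) * (1 - m) ^ n) := by
    intro n
    have e1 : ((n + 1 : ℕ) : ℤ) - 1 = (n : ℤ) := by push_cast; ring
    have e2 : ((n + 1 : ℕ) : ℤ) - 2 = (n : ℤ) - 1 := by push_cast; ring
    have z1 : r ^ (((n + 1 : ℕ) : ℤ) - 1) = r ^ n := by rw [e1, zpow_natCast]
    have z2 : (1 - l) ^ (((n + 1 : ℕ) : ℤ) - 1) = (1 - l) ^ n := by rw [e1, zpow_natCast]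
    have z3 : (1 - m) ^ (((n + 1 : ℕ) : ℤ) - 2) = (1 - m) ^ n / (1 - m) := by
      rw [e2, zpow_sub₀ h1m', zpow_natCast, zpow_one, div_eq_mul_inv]
    simp only [hf, Nat.succ_ne_zero, if_neg, Nat.add_eq_zero, and_false]
    rw [z1, z2, z3]
    simp only [hA, hC, hE, hF, hB, hD, hK]
    push_cast
    field_simp
    ring
  -- summability / value of the shifted series
  have habs : |r| < 1 := by rw [abs_of_pos hr0]; exact hr1
  have habsm : |1 - m| < 1 := by rw [abs_of_pos h1m]; linarith
  have habsl : |1 - l| < 1 := by rw [abs_of_pos h1l]; linarith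
  have hsum : HasSum (fun n : ℕ => f (n + 1))
      (A * (1 / (1 - r) ^ 2) + C * (1 / (1 - (1 - l)) ^ 2)
        + E * (1 / (1 - (1 - m)) ^ 2) + F * (2 / (1 - (1 - m)) ^ 3)) := by
    have h := ((((hasSum_add_one_mul_geometric habs).mul_left A).add
      ((hasSum_add_one_mul_geometric habsl).mul_left C)).add
      ((hasSum_add_one_mul_geometric habsm).mul_left E)).add
      ((hasSum_add_one_mul_add_two_mul_geometric habsm).mul_left F)
    convert h using 2 with n
    rfl
    rw [key n]
  -- shift the tsum
  have hshift : (∑' n : ℕ, f (n + 1)) = ∑' x : ℕ, f x := by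
    apply Function.Injective.tsum_eq (g := fun n : ℕ => n + 1)
    · exact fun a b h => by simpa using h
    · intro x hx
      rcases Nat.eq_zero_or_pos x with h0 | hpos
      · subst h0; simp [hf] at hx
      · exact ⟨x - 1, by simp; omega⟩
  rw [hf] at hshift ⊢
  rw [← hshift, hsum.tsum_eq]
  -- final algebra
  have h1r : 1 - r = (m - l) / (1 - l) := by rw [hr]; field_simp; ring
  rw [h1r]
  simp only [hA, hC, hE, hF, hB, hD, hK]
  have : (1:ℝ) - (1 - m) = m := by ring
  rw [this]
  have : (1:ℝ) - (1 - l) = l := by ring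
  rw [this]
  have hlm' : l - m ≠ 0 := by intro h; apply hml'; linarith [h]
  field_simp
  ring
end

section
/- For λ, μ ∈ (0,1), λ ≠ μ, and for every integer x ≥ 1, the pmf P_A(x) = ((λ(1−μ)+μ)/(λ−μ)) · [ (λ−μ)((1−λ)(1−μ))^{x−1} − λ(1−λ)^{x−1} + μ(1−μ)^{x−1} ] is nonnegative and sums to 1 over x ∈ {1,2,...}. -/
open Finset in
lemma key_bracket (a b : ℝ) (ha0 : 0 < a) (hb1 : b < 1) (hab : a < b) (n : ℕ) :
    0 ≤ (b - a) * (a * b) ^ n - (1 - a) * a ^ n + (1 - b) * b ^ n := by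
  have hb0 : 0 < b := ha0.trans hab
  have ha1 : a < 1 := hab.trans hb1
  set S := ∑ i ∈ range n, b ^ i * a ^ (n - 1 - i) with hSdef
  set T := ∑ i ∈ range n, b ^ i with hTdef
  have hS : S * (b - a) = b ^ n - a ^ n := geom_sum₂_mul b a n
  have hT : T * (b - 1) = b ^ n - 1 := geom_sum_mul b n
  have e : (b - a) * (a * b) ^ n - (1 - a) * a ^ n + (1 - b) * b ^ n
      = (1 - b) * (b - a) * (S - a ^ n * T) := by
    linear_combination (b - 1) * hS + (a - b) * a ^ n * hT + (b - a) * (mul_pow a b n)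
  rw [e]
  have hST : a ^ n * T ≤ S := by
    rw [hTdef, Finset.mul_sum, hSdef]
    apply Finset.sum_le_sum
    intro i _
    rw [mul_comm]
    have : a ^ n ≤ a ^ (n - 1 - i) :=
      pow_le_pow_of_le_one ha0.le ha1.le (le_trans (Nat.sub_le _ _) (Nat.sub_le _ _))
    exact mul_le_mul_of_nonneg_left this (pow_nonneg hb0.le i)
  have : 0 ≤ (1 - b) * (b - a) := mul_nonneg (by linarith) (by linarith)
  exact mul_nonneg this (by linarith)

/-- The stationary pmf of the PAoI for the preemptive LCFS Geo/Geo/1 queue,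
`P_A(x) = ((λ(1−μ)+μ)/(λ−μ))[(λ−μ)((1−λ)(1−μ))^{x−1} − λ(1−λ)^{x−1} + μ(1−μ)^{x−1}]`,
is nonnegative and sums to 1 over `x ∈ {1,2,...}`. -/
theorem lcfs_paoi_pmf (l m : ℝ) (hl0 : 0 < l) (hl1 : l < 1) (hm0 : 0 < m) (hm1 : m < 1)
    (hne : l ≠ m) :
    (∀ x : ℕ, 1 ≤ x →
      0 ≤ (l * (1 - m) + m) / (l - m) *
        ((l - m) * ((1 - l) * (1 - m)) ^ (x - 1) - l * (1 - l) ^ (x - 1)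
          + m * (1 - m) ^ (x - 1))) ∧
    (∑' x : ℕ, (if x = 0 then (0 : ℝ) else (l * (1 - m) + m) / (l - m) *
        ((l - m) * ((1 - l) * (1 - m)) ^ (x - 1) - l * (1 - l) ^ (x - 1)
          + m * (1 - m) ^ (x - 1)))) = 1 := by
  have ha0 : 0 < 1 - l := by linarith
  have hb0 : 0 < 1 - m := by linarith
  have hab1 : (1 - l) * (1 - m) < 1 := by nlinarith
  have hD : 0 < l * (1 - m) + m := by nlinarith
  constructor
  · intro x _
    set n := x - 1
    rcases lt_or_gt_of_ne hne with hlm | hlm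
    · -- l < m, so a = 1-l > b = 1-m
      have hk := key_bracket (1 - m) (1 - l) hb0 (by linarith) (by linarith) n
      have hc : (l * (1 - m) + m) / (l - m) ≤ 0 :=
        div_nonpos_of_nonneg_of_nonpos hD.le (by linarith)
      have hg : (l - m) * ((1 - l) * (1 - m)) ^ n - l * (1 - l) ^ n + m * (1 - m) ^ n ≤ 0 := by
        have : ((1 - m) * (1 - l)) ^ n = ((1 - l) * (1 - m)) ^ n := by ring_nf
        nlinarith [hk]
      nlinarith [mul_nonneg (neg_nonneg.2 hc) (neg_nonneg.2 hg)]
    · -- m < l, so b = 1-m > a = 1-l ... key with a := 1-l, b := 1-m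
      have hk := key_bracket (1 - l) (1 - m) ha0 (by linarith) (by linarith) n
      have hc : 0 ≤ (l * (1 - m) + m) / (l - m) :=
        div_nonneg hD.le (by linarith)
      have hg : 0 ≤ (l - m) * ((1 - l) * (1 - m)) ^ n - l * (1 - l) ^ n + m * (1 - m) ^ n := by
        nlinarith [hk]
      exact mul_nonneg hc hg
  · set C := (l * (1 - m) + m) / (l - m) with hC
    set f : ℕ → ℝ := fun x => if x = 0 then (0 : ℝ) else C *
        ((l - m) * ((1 - l) * (1 - m)) ^ (x - 1) - l * (1 - l) ^ (x - 1)
          + m * (1 - m) ^ (x - 1)) with hf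
    have hr1 : Summable (fun n : ℕ => ((1 - l) * (1 - m)) ^ n) :=
      summable_geometric_of_lt_one (by positivity) hab1
    have hr2 : Summable (fun n : ℕ => (1 - l) ^ n) :=
      summable_geometric_of_lt_one ha0.le (by linarith)
    have hr3 : Summable (fun n : ℕ => (1 - m) ^ n) :=
      summable_geometric_of_lt_one hb0.le (by linarith)
    have hshift : ∀ n : ℕ, f (n + 1) = C *
        ((l - m) * ((1 - l) * (1 - m)) ^ n - l * (1 - l) ^ n + m * (1 - m) ^ n) := by
      intro n; simp [hf]
    have hgsum : Summable (fun n : ℕ => f (n + 1)) := by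
      simp only [hshift]
      exact (((hr1.mul_left _).sub (hr2.mul_left _)).add (hr3.mul_left _)).mul_left C
    have hfsum : Summable f := (summable_nat_add_iff 1).mp hgsum
    rw [show (∑' x : ℕ, (if x = 0 then (0 : ℝ) else (l * (1 - m) + m) / (l - m) *
        ((l - m) * ((1 - l) * (1 - m)) ^ (x - 1) - l * (1 - l) ^ (x - 1)
          + m * (1 - m) ^ (x - 1)))) = ∑' x, f x from rfl]
    rw [Summable.tsum_eq_zero_add hfsum]
    have hf0 : f 0 = 0 := by simp [hf]
    simp only [hshift]
    rw [hf0, zero_add]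
    rw [tsum_mul_left, Summable.tsum_add ((hr1.mul_left _).sub (hr2.mul_left _)) (hr3.mul_left _),
      Summable.tsum_sub (hr1.mul_left _) (hr2.mul_left _), tsum_mul_left, tsum_mul_left, tsum_mul_left,
      tsum_geometric_of_lt_one (by positivity) hab1,
      tsum_geometric_of_lt_one ha0.le (by linarith),
      tsum_geometric_of_lt_one hb0.le (by linarith)]
    have h1 : (1 : ℝ) - (1 - l) * (1 - m) = l * (1 - m) + m := by ring
    have h2 : (1 : ℝ) - (1 - l) = l := by ring
    have h3 : (1 : ℝ) - (1 - m) = m := by ring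
    rw [h1, h2, h3, hC]
    have hlm : l - m ≠ 0 := sub_ne_zero.2 hne
    field_simp
    ring
end

section
/- For λ, μ ∈ (0,1), λ ≠ μ, the mean of the pmf P_A(x) = ((λ(1−μ)+μ)/(λ−μ))[(λ−μ)((1−λ)(1−μ))^{x−1} − λ(1−λ)^{x−1} + μ(1−μ)^{x−1}] over x ∈ {1,2,...} equals (λ²(1−μ)² + λμ(3−2μ) + μ²)/(λμ(λ(1−μ)+μ)). -/
lemma aux_summable (q : ℝ) (h : |q| < 1) :
    Summable (fun x : ℕ => (x : ℝ) * q ^ (x - 1)) := by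
  rw [← summable_nat_add_iff 1]
  have h1 : Summable (fun n : ℕ => (n : ℝ) ^ 1 * q ^ n) :=
    summable_pow_mul_geometric_of_norm_lt_one 1 (by simpa using h)
  have h2 : Summable (fun n : ℕ => q ^ n) := summable_geometric_of_norm_lt_one (by simpa using h)
  refine (h1.add h2).congr fun n => ?_
  push_cast
  ring

lemma aux_tsum (q : ℝ) (h : |q| < 1) :
    ∑' x : ℕ, (x : ℝ) * q ^ (x - 1) = 1 / (1 - q) ^ 2 := by
  have hnorm : ‖q‖ < 1 := by simpa using h
  have hq1 : (1 : ℝ) - q ≠ 0 := by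
    have : q < 1 := lt_of_abs_lt h
    linarith
  rw [Summable.tsum_eq_zero_add (aux_summable q h)]
  simp only [Nat.cast_zero, zero_mul, zero_add, Nat.add_sub_cancel, Nat.cast_add, Nat.cast_one]
  have e : ∀ n : ℕ, ((n : ℝ) + 1) * q ^ n = (n : ℝ) * q ^ n + q ^ n := fun n => by ring
  rw [tsum_congr e, Summable.tsum_add (by simpa using summable_pow_mul_geometric_of_norm_lt_one 1 hnorm)
    (summable_geometric_of_norm_lt_one hnorm),
    tsum_coe_mul_geometric_of_norm_lt_one hnorm, tsum_geometric_of_norm_lt_one hnorm]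
  field_simp
  ring

/-- The mean of the preemptive LCFS Geo/Geo/1 PAoI pmf equals
`(λ²(1−μ)² + λμ(3−2μ) + μ²)/(λμ(λ(1−μ)+μ))`. -/
theorem lcfs_paoi_mean (l m : ℝ) (hl0 : 0 < l) (hl1 : l < 1) (hm0 : 0 < m) (hm1 : m < 1)
    (hne : l ≠ m) :
    (∑' x : ℕ, (x : ℝ) * (if x = 0 then (0 : ℝ) else (l * (1 - m) + m) / (l - m) *
        ((l - m) * ((1 - l) * (1 - m)) ^ (x - 1) - l * (1 - l) ^ (x - 1)
          + m * (1 - m) ^ (x - 1)))) =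
      (l ^ 2 * (1 - m) ^ 2 + l * m * (3 - 2 * m) + m ^ 2) / (l * m * (l * (1 - m) + m)) := by
  set c : ℝ := (l * (1 - m) + m) / (l - m) with hc
  set r : ℝ := (1 - l) * (1 - m) with hr
  set a : ℝ := 1 - l with ha
  set b : ℝ := 1 - m with hb
  have har : |r| < 1 := by
    rw [abs_lt]; constructor <;> nlinarith
  have haa : |a| < 1 := by rw [abs_lt]; constructor <;> nlinarith
  have hab : |b| < 1 := by rw [abs_lt]; constructor <;> nlinarith
  have key : ∀ x : ℕ, (x : ℝ) * (if x = 0 then (0 : ℝ) else c *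
        ((l - m) * r ^ (x - 1) - l * a ^ (x - 1) + m * b ^ (x - 1))) =
      (c * (l - m)) * ((x : ℝ) * r ^ (x - 1)) - (c * l) * ((x : ℝ) * a ^ (x - 1))
        + (c * m) * ((x : ℝ) * b ^ (x - 1)) := by
    intro x
    rcases Nat.eq_zero_or_pos x with h0 | h0
    · subst h0; simp
    · rw [if_neg (Nat.pos_iff_ne_zero.mp h0)]; ring
  rw [tsum_congr key]
  have Sr := aux_summable r har
  have Sa := aux_summable a haa
  have Sb := aux_summable b hab
  rw [Summable.tsum_add (((Sr.mul_left _)).sub (Sa.mul_left _)) (Sb.mul_left _),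
    Summable.tsum_sub (Sr.mul_left _) (Sa.mul_left _),
    tsum_mul_left, tsum_mul_left, tsum_mul_left,
    aux_tsum r har, aux_tsum a haa, aux_tsum b hab]
  have h1 : (1 : ℝ) - a = l := by rw [ha]; ring
  have h2 : (1 : ℝ) - b = m := by rw [hb]; ring
  have h3 : (1 : ℝ) - r = l * (1 - m) + m := by rw [hr]; ring
  rw [h1, h2, h3, hc]
  have hlm : l - m ≠ 0 := sub_ne_zero.mpr hne
  have hd : l * (1 - m) + m ≠ 0 := by nlinarith
  rw [hb]
  field_simp
  ring
end
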